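/- If L is an invertible 1-dimensional K-rational lattice, then the commensurability class c(L) is in bijection with the set of nonzero ideals J ⊆ A, via J ↦ J^{-1}L; explicitly, every lattice commensurable to L = (sR∩K, ρ) with ρ ∈ R^* is of the form (s'=su, ρ'=ρu) mod K^* for a unique u ∈ R ∩ A_{K,f}^*, corresponding to the ideal J = Ru ∩ K. -/

import Mathlib

/-- The commensurability class of an invertible 1-dimensional K-rational lattice is
in bijection with the set of nonzero ideals of `A`.  Adelic model: `A` is the ring
of finite adeles `A_{K,f}`, `R ⊆ A` the finite integral adeles, `Kstar ≤ Aˣ` the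
subgroup `Kˣ`.  The invertible lattice `L` is given by `(s, ρ)` with `ρ ∈ Rˣ`
(i.e. `ρ, ρ⁻¹ ∈ R`); a lattice `(s', ρ')` (with `ρ' ∈ R`) is commensurable to `L`
iff `ρ's'⁻¹ = r·ρs⁻¹` for some `r ∈ Kˣ`.  Then there is a unique `u ∈ R ∩ A_{K,f}ˣ`
(corresponding to the ideal `J = Ru ∩ K`, so that the lattice is `J⁻¹L`) with
`ρ' = ρu` and `s' = su mod Kˣ`. -/
theorem stmt9 {A : Type*} [CommRing A] (R : Subring A) (Kstar : Subgroup Aˣ)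
    (ρ s : Aˣ) (hρ : ((ρ : Aˣ) : A) ∈ R) (hρi : ((ρ⁻¹ : Aˣ) : A) ∈ R)
    (ρ' : A) (hρ' : ρ' ∈ R) (s' : Aˣ)
    (hcomm : ∃ r ∈ Kstar,
      ρ' * ((s'⁻¹ : Aˣ) : A) = ((r : Aˣ) : A) * (((ρ : Aˣ) : A) * ((s⁻¹ : Aˣ) : A))) :
    ∃! u : Aˣ, ((u : Aˣ) : A) ∈ R ∧ ρ' = ((ρ : Aˣ) : A) * ((u : Aˣ) : A) ∧
      ∃ r ∈ Kstar, s' = s * u * r := by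
  obtain ⟨r, hr, hc⟩ := hcomm
  -- ρ' = r * ρ * s⁻¹ * s'
  have hρ'eq : ρ' = ((r : Aˣ) : A) * (ρ : A) * ((s⁻¹ : Aˣ) : A) * ((s' : Aˣ) : A) := by
    have := congrArg (· * ((s' : Aˣ) : A)) hc
    simpa [mul_assoc, mul_comm, mul_left_comm] using this
  refine ⟨s⁻¹ * s' * r, ⟨?_, ?_, r⁻¹, Kstar.inv_mem hr, ?_⟩, ?_⟩
  · have : ((s⁻¹ * s' * r : Aˣ) : A) = ((ρ⁻¹ : Aˣ) : A) * ρ' := by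
      rw [hρ'eq]; push_cast
      linear_combination (-(((s⁻¹ : Aˣ) : A) * ((s' : Aˣ) : A) * ((r : Aˣ) : A))) * ρ.inv_mul
    rw [this]; exact R.mul_mem hρi hρ'
  · rw [hρ'eq]; push_cast; ring
  · group
  · rintro u ⟨-, hu, -⟩
    have : ((ρ : Aˣ) : A) * ((u : Aˣ) : A) = ((ρ : Aˣ) : A) * ((s⁻¹ * s' * r : Aˣ) : A) := by
      rw [← hu, hρ'eq]; push_cast; ring
    apply Units.ext
    have h2 := congrArg (((ρ⁻¹ : Aˣ) : A) * ·) this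
    simpa [← mul_assoc] using h2
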